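/- Consider Bernoulli bond percolation with parameter p on the Hamming graph H(d,n) with d ≥ 2, n ≥ 2. Let χ_line(p) denote the expected number of vertices joined to a fixed vertex v by open paths lying entirely within a single line through v (so χ_line(p) equals the susceptibility of the Erdős–Rényi graph G(n,p)). If (d−1)(χ_line(p) − 1) < 1, then the full susceptibility satisfies χ(p) ≤ χ_line(p) / (1 − (d−1)(χ_line(p) − 1)). -/

import Mathlib

open scoped Classical

noncomputable section

namespace Perc

variable {V : Type*} [Fintype V] [DecidableEq V]

/-- A percolation configuration: each (potential) edge is open (`true`) or closed (`false`). -/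
abbrev Config (V : Type*) := Sym2 V → Bool

/-- The probability weight of a configuration under Bernoulli(p) bond percolation on `G`:
non-edges of `G` are forced closed. -/
def weight (G : SimpleGraph V) (p : ℝ) (ω : Config V) : ℝ :=
  ∏ e : Sym2 V,
    if e ∈ G.edgeSet then (if ω e then p else 1 - p) else (if ω e then (0 : ℝ) else 1)

/-- Expectation under Bernoulli(p) bond percolation on `G`. -/
def expect (G : SimpleGraph V) (p : ℝ) (f : Config V → ℝ) : ℝ :=
  ∑ ω : Config V, weight G p ω * f ω

/-- Probability of an event under Bernoulli(p) bond percolation on `G`. -/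
def prob (G : SimpleGraph V) (p : ℝ) (A : Config V → Prop) : ℝ :=
  expect G p fun ω => if A ω then 1 else 0

/-- The subgraph of open edges of `G` in configuration `ω`. -/
def openGraph (G : SimpleGraph V) (ω : Config V) : SimpleGraph V where
  Adj x y := G.Adj x y ∧ ω (s(x, y)) = true
  symm := ⟨by
    intro x y h
    refine ⟨h.1.symm, ?_⟩
    rw [Sym2.eq_swap]
    exact h.2⟩
  loopless := ⟨fun x h => G.loopless.irrefl x h.1⟩

/-- The (vertex set of the) cluster of `x`: all vertices joined to `x` by open paths. -/
def cluster (G : SimpleGraph V) (ω : Config V) (x : V) : Finset V :=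
  Finset.univ.filter fun y => (openGraph G ω).Reachable x y

/-- The susceptibility: expected cluster size of `x`. -/
def chi (G : SimpleGraph V) (p : ℝ) (x : V) : ℝ :=
  expect G p fun ω => ((cluster G ω x).card : ℝ)

/-- The two-point function `τ_p(x-y) = ℙ_p(x ↔ y)`. -/
def tau (G : SimpleGraph V) (p : ℝ) (x y : V) : ℝ :=
  prob G p fun ω => (openGraph G ω).Reachable x y

end Perc

/-- The Hamming graph `H(d,n)`: vertices differ in exactly one coordinate. -/
def hamming (d n : ℕ) : SimpleGraph (Fin d → Fin n) where
  Adj x y := (Finset.univ.filter fun i => x i ≠ y i).card = 1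
  symm := ⟨by
    intro x y h
    have h2 : (Finset.univ.filter fun i => y i ≠ x i)
        = (Finset.univ.filter fun i => x i ≠ y i) := by
      apply Finset.filter_congr
      intro i _
      exact ne_comm
    rw [h2]
    exact h⟩
  loopless := ⟨by
    intro x h
    simp at h⟩

instance hammingAdjDecidable (d n : ℕ) : DecidableRel (hamming d n).Adj := fun _ _ =>
  inferInstanceAs (Decidable (_ = 1))

/-- The degree `m = d(n-1)` of `H(d,n)`, as a real number. -/
def mR (d n : ℕ) : ℝ := (d : ℝ) * ((n : ℝ) - 1)

/-- The number of vertices `V = n^d` of `H(d,n)`, as a real number. -/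
def VR (d n : ℕ) : ℝ := (n : ℝ) ^ d

/-- The cube root `V^{1/3}` of the number of vertices of `H(d,n)`. -/
def V13 (d n : ℕ) : ℝ := ((n : ℝ) ^ d) ^ ((1 : ℝ) / 3)

/-- A fixed base vertex of `H(d,n)`. -/
def v0 (d n : ℕ) (hn : 0 < n) : Fin d → Fin n := fun _ => ⟨0, hn⟩

/-- The `i`-directional line of `H(d,n)` through `v`, as a subgraph of `H(d,n)`:
both endpoints agree with `v` in every coordinate other than `i`. -/
def lineGraph (d n : ℕ) (i : Fin d) (v : Fin d → Fin n) : SimpleGraph (Fin d → Fin n) where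
  Adj x y := (hamming d n).Adj x y ∧ (∀ j, j ≠ i → x j = v j) ∧ (∀ j, j ≠ i → y j = v j)
  symm := ⟨fun x y h => ⟨(hamming d n).symm.symm _ _ h.1, h.2.2, h.2.1⟩⟩
  loopless := ⟨fun x h => (hamming d n).loopless.irrefl x h.1⟩

/-- The line susceptibility `χ_line(p)`: the expected number of vertices joined to `v` by
open paths lying entirely within the `i`-directional line through `v`. -/
def lineChi (d n : ℕ) (p : ℝ) (i : Fin d) (v : Fin d → Fin n) : ℝ :=
  Perc.expect (hamming d n) p fun ω =>
    ((Finset.univ.filter fun y =>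
        (Perc.openGraph (lineGraph d n i v) ω).Reachable v y).card : ℝ)

namespace PercAux
set_option linter.unusedSectionVars false

open Perc

variable {V : Type*} [Fintype V] [DecidableEq V]

lemma weight_nonneg (G : SimpleGraph V) {p : ℝ} (hp0 : 0 ≤ p) (hp1 : p ≤ 1) (ω : Config V) :
    0 ≤ weight G p ω := by
  apply Finset.prod_nonneg
  intro e _
  split_ifs <;> first | linarith | norm_num

lemma sum_weight (G : SimpleGraph V) (p : ℝ) : ∑ ω : Config V, weight G p ω = 1 := by
  have h : ∑ ω : Config V, weight G p ω
      = ∏ e : Sym2 V, ∑ b : Bool,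
          (if e ∈ G.edgeSet then (if b then p else 1 - p) else (if b then (0:ℝ) else 1)) := by
    rw [Fintype.prod_sum]
    rfl
  rw [h]
  apply Finset.prod_eq_one
  intro e _
  by_cases he : e ∈ G.edgeSet <;> simp [he, Fintype.sum_bool] <;> ring

lemma expect_const (G : SimpleGraph V) (p : ℝ) (c : ℝ) :
    expect G p (fun _ => c) = c := by
  unfold expect
  rw [← Finset.sum_mul, sum_weight, one_mul]

lemma expect_mono (G : SimpleGraph V) {p : ℝ} (hp0 : 0 ≤ p) (hp1 : p ≤ 1)
    {f g : Config V → ℝ} (h : ∀ ω, f ω ≤ g ω) :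
    expect G p f ≤ expect G p g := by
  apply Finset.sum_le_sum
  intro ω _
  exact mul_le_mul_of_nonneg_left (h ω) (weight_nonneg G hp0 hp1 ω)

lemma expect_nonneg (G : SimpleGraph V) {p : ℝ} (hp0 : 0 ≤ p) (hp1 : p ≤ 1)
    {f : Config V → ℝ} (h : ∀ ω, 0 ≤ f ω) :
    0 ≤ expect G p f := by
  have := expect_mono G hp0 hp1 (f := fun _ => 0) (g := f) h
  rwa [expect_const] at this

lemma expect_add (G : SimpleGraph V) (p : ℝ) (f g : Config V → ℝ) :
    expect G p (fun ω => f ω + g ω) = expect G p f + expect G p g := by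
  unfold expect
  rw [← Finset.sum_add_distrib]
  exact Finset.sum_congr rfl fun ω _ => by ring

lemma expect_sum (G : SimpleGraph V) (p : ℝ) {ι : Type*} (s : Finset ι)
    (f : ι → Config V → ℝ) :
    expect G p (fun ω => ∑ j ∈ s, f j ω) = ∑ j ∈ s, expect G p (f j) := by
  unfold expect
  rw [Finset.sum_comm]
  exact Finset.sum_congr rfl fun ω _ => by rw [Finset.mul_sum]


def combine (D : Set (Sym2 V)) (a b : Perc.Config V) : Perc.Config V :=
  fun e => if e ∈ D then a e else b e

def swapEquiv (D : Set (Sym2 V)) : (Perc.Config V × Perc.Config V) ≃ (Perc.Config V × Perc.Config V) where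
  toFun x := (combine D x.1 x.2, combine D x.2 x.1)
  invFun x := (combine D x.1 x.2, combine D x.2 x.1)
  left_inv := by
    rintro ⟨a, b⟩
    refine Prod.ext ?_ ?_ <;> funext e <;> by_cases h : e ∈ D <;> simp [combine, h]
  right_inv := by
    rintro ⟨a, b⟩
    refine Prod.ext ?_ ?_ <;> funext e <;> by_cases h : e ∈ D <;> simp [combine, h]

lemma weight_combine (G : SimpleGraph V) (p : ℝ) (D : Set (Sym2 V)) (a b : Perc.Config V) :
    Perc.weight G p (combine D a b) * Perc.weight G p (combine D b a)
      = Perc.weight G p a * Perc.weight G p b := by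
  unfold Perc.weight
  rw [← Finset.prod_mul_distrib, ← Finset.prod_mul_distrib]
  apply Finset.prod_congr rfl
  intro e _
  by_cases h : e ∈ D
  · simp [combine, h]
  · simp only [combine, if_neg h]
    exact mul_comm _ _

lemma expect_mul_of_determined (G : SimpleGraph V) (p : ℝ) (D : Set (Sym2 V))
    (f g : Perc.Config V → ℝ)
    (hf : ∀ ω₁ ω₂ : Perc.Config V, (∀ e ∈ D, ω₁ e = ω₂ e) → f ω₁ = f ω₂)
    (hg : ∀ ω₁ ω₂ : Perc.Config V, (∀ e ∉ D, ω₁ e = ω₂ e) → g ω₁ = g ω₂) :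
    Perc.expect G p (fun ω => f ω * g ω) = Perc.expect G p f * Perc.expect G p g := by
  refine Eq.symm ?_
  have h1 : Perc.expect G p f * Perc.expect G p g
      = ∑ x : Perc.Config V × Perc.Config V,
          (Perc.weight G p x.1 * Perc.weight G p x.2) * (f x.1 * g x.2) := by
    unfold Perc.expect
    rw [Finset.sum_mul_sum, Fintype.sum_prod_type]
    apply Finset.sum_congr rfl
    intro a _
    apply Finset.sum_congr rfl
    intro b _
    ring
  have h2 : ∀ x : Perc.Config V × Perc.Config V,
      (Perc.weight G p (combine D x.1 x.2) * Perc.weight G p (combine D x.2 x.1))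
        * (f (combine D x.1 x.2) * g (combine D x.2 x.1))
      = (Perc.weight G p x.1 * Perc.weight G p x.2) * (f x.1 * g x.1) := by
    intro ⟨a, b⟩
    rw [weight_combine]
    congr 1
    congr 1
    · exact hf _ _ (fun e he => by simp [combine, he])
    · exact hg _ _ (fun e he => by simp [combine, he])
  calc Perc.expect G p f * Perc.expect G p g
      = ∑ x : Perc.Config V × Perc.Config V,
          (Perc.weight G p x.1 * Perc.weight G p x.2) * (f x.1 * g x.2) := h1
    _ = ∑ x : Perc.Config V × Perc.Config V,
          (Perc.weight G p (combine D x.1 x.2) * Perc.weight G p (combine D x.2 x.1))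
            * (f (combine D x.1 x.2) * g (combine D x.2 x.1)) :=
        (Equiv.sum_comp (swapEquiv D) (fun x =>
          (Perc.weight G p x.1 * Perc.weight G p x.2) * (f x.1 * g x.2))).symm
    _ = ∑ x : Perc.Config V × Perc.Config V,
          (Perc.weight G p x.1 * Perc.weight G p x.2) * (f x.1 * g x.1) := by
        apply Finset.sum_congr rfl; intro x _; exact h2 x
    _ = Perc.expect G p (fun ω => f ω * g ω) := by
        unfold Perc.expect
        rw [Fintype.sum_prod_type]
        apply Finset.sum_congr rfl
        intro a _
        have hb : ∑ b : Perc.Config V,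
            Perc.weight G p a * Perc.weight G p b * (f a * g a)
            = (∑ b : Perc.Config V, Perc.weight G p b)
                * (Perc.weight G p a * (f a * g a)) := by
          rw [Finset.sum_mul]
          apply Finset.sum_congr rfl
          intro b _
          ring
        rw [hb, sum_weight, one_mul]

end PercAux

namespace PercAux
open Perc
set_option linter.unusedSectionVars false

variable {V : Type*} [Fintype V] [DecidableEq V]

/-- Restriction of a graph to a vertex set. -/
def restrictG (G : SimpleGraph V) (X : Finset V) : SimpleGraph V where
  Adj x y := G.Adj x y ∧ x ∈ X ∧ y ∈ X
  symm := ⟨fun x y h => ⟨h.1.symm, h.2.2, h.2.1⟩⟩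
  loopless := ⟨fun x h => G.loopless.irrefl x h.1⟩

/-- Cluster of `w` in the open subgraph of `G₀`. -/
def clusterF (G₀ : SimpleGraph V) (ω : Perc.Config V) (w : V) : Finset V :=
  Finset.univ.filter fun y => (Perc.openGraph G₀ ω).Reachable w y

lemma mem_clusterF {G₀ : SimpleGraph V} {ω : Perc.Config V} {w y : V} :
    y ∈ clusterF G₀ ω w ↔ (Perc.openGraph G₀ ω).Reachable w y := by
  simp [clusterF]

lemma self_mem_clusterF {G₀ : SimpleGraph V} {ω : Perc.Config V} {w : V} :
    w ∈ clusterF G₀ ω w := mem_clusterF.mpr (SimpleGraph.Reachable.refl w)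

lemma clusterF_closed {G₀ : SimpleGraph V} {ω : Perc.Config V} {w y z : V}
    (hy : y ∈ clusterF G₀ ω w) (h : (Perc.openGraph G₀ ω).Adj y z) :
    z ∈ clusterF G₀ ω w :=
  mem_clusterF.mpr ((mem_clusterF.mp hy).trans h.reachable)

lemma clusterF_mono {G₀ G₁ : SimpleGraph V} (h : G₀ ≤ G₁) (ω : Perc.Config V) (w : V) :
    clusterF G₀ ω w ⊆ clusterF G₁ ω w := by
  intro y hy
  refine mem_clusterF.mpr ((mem_clusterF.mp hy).mono ?_)
  intro a b hab
  exact ⟨h hab.1, hab.2⟩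

/-- Exit decomposition along a walk: either the walk avoids `S` entirely, or there is a
last exit edge from `S` followed by a suffix avoiding `S`. -/
lemma exit_walk {H : SimpleGraph V} (S : Finset V) :
    ∀ {z y : V} (q : H.Walk z y), y ∉ S →
      (∀ x ∈ q.support, x ∉ S) ∨
      ∃ w₂ z₂ : V, w₂ ∈ S ∧ z₂ ∉ S ∧ H.Adj w₂ z₂ ∧
        ∃ q' : H.Walk z₂ y, ∀ x ∈ q'.support, x ∉ S := by
  intro z y q
  induction q with
  | nil =>
      intro hy
      left
      intro x hx
      simp only [SimpleGraph.Walk.support_nil, List.mem_singleton] at hx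
      subst hx; exact hy
  | @cons a b c h q ih =>
      intro hy
      rcases ih hy with hall | ⟨w₂, z₂, hw₂, hz₂, hadj, q', hq'⟩
      · by_cases ha : a ∈ S
        · right
          exact ⟨a, b, ha, hall b q.start_mem_support, h, q, hall⟩
        · left
          intro x hx
          rw [SimpleGraph.Walk.support_cons] at hx
          rcases List.mem_cons.mp hx with rfl | hx
          · exact ha
          · exact hall x hx
      · exact Or.inr ⟨w₂, z₂, hw₂, hz₂, hadj, q', hq'⟩

/-- Transfer a walk whose support satisfies `P` into reachability in another graph. -/
lemma reachable_transfer {H₁ H₂ : SimpleGraph V} {P : V → Prop}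
    (himp : ∀ x y, H₁.Adj x y → P x → P y → H₂.Adj x y) :
    ∀ {a y : V} (q : H₁.Walk a y), (∀ x ∈ q.support, P x) → H₂.Reachable a y := by
  intro a y q
  induction q with
  | nil => exact fun _ => SimpleGraph.Reachable.refl _
  | @cons a b c h q ih =>
      intro hsupp
      have hPa : P a := hsupp a (by rw [SimpleGraph.Walk.support_cons]; exact List.mem_cons_self)
      have hPb : P b := by
        apply hsupp b
        rw [SimpleGraph.Walk.support_cons]
        exact List.mem_cons.mpr (Or.inr q.start_mem_support)
      refine (himp a b h hPa hPb).reachable.trans (ih ?_)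
      intro x hx
      exact hsupp x (by rw [SimpleGraph.Walk.support_cons]; exact List.mem_cons.mpr (Or.inr hx))

/-- The support of a walk in a restricted open graph stays in the allowed set. -/
lemma support_mem_restrict {G : SimpleGraph V} {X : Finset V} {ω : Perc.Config V} :
    ∀ {a y : V} (q : (Perc.openGraph (restrictG G X) ω).Walk a y), a ∈ X →
      ∀ x ∈ q.support, x ∈ X := by
  intro a y q
  induction q with
  | nil =>
      intro ha x hx
      simp only [SimpleGraph.Walk.support_nil, List.mem_singleton] at hx
      subst hx; exact ha
  | @cons a b c h q ih =>
      intro ha x hx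
      rw [SimpleGraph.Walk.support_cons] at hx
      rcases List.mem_cons.mp hx with rfl | hx
      · exact ha
      · exact ih h.1.2.2 x hx

/-- Clusters are determined by the states of edges touching them. -/
lemma clusterF_eq_of_agree {G₀ : SimpleGraph V} {ω₁ ω₂ : Perc.Config V} {w : V}
    (hagree : ∀ x y : V, G₀.Adj x y → x ∈ clusterF G₀ ω₁ w →
      ω₁ s(x, y) = ω₂ s(x, y)) :
    clusterF G₀ ω₂ w = clusterF G₀ ω₁ w := by
  have stay : ∀ {a y : V} (q : (Perc.openGraph G₀ ω₂).Walk a y),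
      a ∈ clusterF G₀ ω₁ w → y ∈ clusterF G₀ ω₁ w := by
    intro a y q
    induction q with
    | nil => exact id
    | @cons a b c h q ih =>
        intro ha
        have hω : ω₁ s(a, b) = true := by
          rw [hagree a b h.1 ha]; exact h.2
        exact ih (clusterF_closed ha ⟨h.1, hω⟩)
  have sub1 : clusterF G₀ ω₂ w ⊆ clusterF G₀ ω₁ w := by
    intro y hy
    obtain ⟨q⟩ := mem_clusterF.mp hy
    exact stay q self_mem_clusterF
  have stay2 : ∀ {a y : V} (q : (Perc.openGraph G₀ ω₁).Walk a y),
      a ∈ clusterF G₀ ω₁ w → (Perc.openGraph G₀ ω₂).Reachable w a →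
        (Perc.openGraph G₀ ω₂).Reachable w y := by
    intro a y q
    induction q with
    | nil => exact fun _ h => h
    | @cons a b c h q ih =>
        intro ha hra
        have hω : ω₂ s(a, b) = true := by
          rw [← hagree a b h.1 ha]; exact h.2
        exact ih (clusterF_closed ha h) (hra.trans (SimpleGraph.Adj.reachable ⟨h.1, hω⟩))
  have sub2 : clusterF G₀ ω₁ w ⊆ clusterF G₀ ω₂ w := by
    intro y hy
    obtain ⟨q⟩ := mem_clusterF.mp hy
    exact mem_clusterF.mpr (stay2 q self_mem_clusterF (SimpleGraph.Reachable.refl w))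
  exact Finset.Subset.antisymm sub1 sub2

/-- The `Sym2` equivalence induced by a bijection. -/
def sym2Equiv (σ : V ≃ V) : Sym2 V ≃ Sym2 V where
  toFun := Sym2.map σ
  invFun := Sym2.map σ.symm
  left_inv e := by rw [Sym2.map_map]; simp
  right_inv e := by rw [Sym2.map_map]; simp

lemma weight_relabel (G : SimpleGraph V) (p : ℝ) (σ : V ≃ V)
    (hσ : ∀ x y : V, G.Adj (σ x) (σ y) ↔ G.Adj x y) (ω : Perc.Config V) :
    Perc.weight G p (fun e => ω (Sym2.map σ e)) = Perc.weight G p ω := by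
  have hES : ∀ e : Sym2 V, Sym2.map σ e ∈ G.edgeSet ↔ e ∈ G.edgeSet := by
    intro e
    induction e with
    | _ x y => simp [hσ]
  unfold Perc.weight
  apply Fintype.prod_equiv (sym2Equiv σ)
  intro e
  simp only [sym2Equiv, Equiv.coe_fn_mk, hES]
  split_ifs <;> simp [*]

lemma expect_relabel (G : SimpleGraph V) (p : ℝ) (σ : V ≃ V)
    (hσ : ∀ x y : V, G.Adj (σ x) (σ y) ↔ G.Adj x y) (f : Perc.Config V → ℝ) :
    Perc.expect G p (fun ω => f (fun e => ω (Sym2.map σ e))) = Perc.expect G p f := by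
  unfold Perc.expect
  apply Fintype.sum_equiv (Equiv.arrowCongr (sym2Equiv σ).symm (Equiv.refl Bool))
  intro ω
  have hc : (Equiv.arrowCongr (sym2Equiv σ).symm (Equiv.refl Bool)) ω
      = fun e => ω (Sym2.map σ e) := rfl
  rw [hc, weight_relabel G p σ hσ ω]

end PercAux

namespace HamAux
open Perc PercAux
set_option linter.unusedSectionVars false

variable {d n : ℕ}

/-- Extract the unique differing coordinate of a Hamming edge. -/
lemma adj_exists_dir {x y : Fin d → Fin n} (h : (hamming d n).Adj x y) :
    ∃ c, x c ≠ y c ∧ ∀ j ≠ c, x j = y j := by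
  have hcard : (Finset.univ.filter fun i => x i ≠ y i).card = 1 := h
  obtain ⟨c, hc⟩ := Finset.card_eq_one.mp hcard
  refine ⟨c, ?_, ?_⟩
  · have : c ∈ Finset.univ.filter fun i => x i ≠ y i := by
      rw [hc]; exact Finset.mem_singleton_self c
    exact (Finset.mem_filter.mp this).2
  · intro j hj
    by_contra hne
    have : j ∈ Finset.univ.filter fun i => x i ≠ y i :=
      Finset.mem_filter.mpr ⟨Finset.mem_univ j, hne⟩
    rw [hc, Finset.mem_singleton] at this
    exact hj this

lemma adj_of_dir {x y : Fin d → Fin n} {c : Fin d} (h1 : x c ≠ y c)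
    (h2 : ∀ j ≠ c, x j = y j) : (hamming d n).Adj x y := by
  show (Finset.univ.filter fun i => x i ≠ y i).card = 1
  have : (Finset.univ.filter fun i => x i ≠ y i) = {c} := by
    apply Finset.eq_singleton_iff_unique_mem.mpr
    refine ⟨Finset.mem_filter.mpr ⟨Finset.mem_univ c, h1⟩, ?_⟩
    intro j hj
    by_contra hne
    exact (Finset.mem_filter.mp hj).2 (h2 j hne)
  rw [this, Finset.card_singleton]

/-- The endpoints of a line edge differ exactly in the line direction. -/
lemma line_edge_diff {b : Fin d} {w x y : Fin d → Fin n}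
    (h : (lineGraph d n b w).Adj x y) : x b ≠ y b ∧ ∀ j ≠ b, x j = y j := by
  obtain ⟨c, hc, hcj⟩ := adj_exists_dir h.1
  have hcb : c = b := by
    by_contra hcb
    exact hc ((h.2.1 c hcb).trans (h.2.2 c hcb).symm)
  subst hcb
  exact ⟨hc, fun j hj => (h.2.1 j hj).trans (h.2.2 j hj).symm⟩

/-- A Hamming edge from `w₂` lies in the line through `w₂` in its differing direction. -/
lemma adj_line_dir {w₂ z : Fin d → Fin n} (h : (hamming d n).Adj w₂ z) :
    ∃ c, (lineGraph d n c w₂).Adj w₂ z := by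
  obtain ⟨c, hc, hcj⟩ := adj_exists_dir h
  exact ⟨c, h, fun j _ => rfl, fun j hj => (hcj j hj).symm⟩

/-- Membership in a line cluster forces agreement with `w` off the direction. -/
lemma reachable_line_mem {b : Fin d} {w y : Fin d → Fin n} {G₀ : SimpleGraph (Fin d → Fin n)}
    (hG₀ : G₀ ≤ lineGraph d n b w) {ω : Perc.Config (Fin d → Fin n)}
    (h : (Perc.openGraph G₀ ω).Reachable w y) : ∀ j ≠ b, y j = w j := by
  obtain ⟨q⟩ := h
  have key : ∀ {a y : Fin d → Fin n} (q : (Perc.openGraph G₀ ω).Walk a y),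
      (∀ j ≠ b, a j = w j) → ∀ j ≠ b, y j = w j := by
    intro a y q
    induction q with
    | nil => exact id
    | @cons a u c h' q ih =>
        intro _
        exact ih fun j hj => (hG₀ h'.1).2.2 j hj
  exact key q fun j _ => rfl

lemma exists_adj_of_reachable {H : SimpleGraph (Fin d → Fin n)} {w y : Fin d → Fin n}
    (h : H.Reachable w y) : y = w ∨ ∃ x, H.Adj x y := by
  obtain ⟨q⟩ := h
  induction q with
  | nil => exact Or.inl rfl
  | @cons a u c h' q ih =>
      rcases ih with rfl | ⟨x, hx⟩
      · exact Or.inr ⟨a, h'⟩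
      · exact Or.inr ⟨x, hx⟩

end HamAux

namespace HamAux
open Perc PercAux
set_option linter.unusedSectionVars false

variable {d n : ℕ}

/-- The automorphism of `H(d,n)` sending `v` to `w` and direction `i` to direction `b`. -/
def hamAut (i b : Fin d) (v w : Fin d → Fin n) : (Fin d → Fin n) ≃ (Fin d → Fin n) where
  toFun x := fun j => Equiv.swap (v (Equiv.swap i b j)) (w j) (x (Equiv.swap i b j))
  invFun y := fun j => Equiv.swap (v j) (w (Equiv.swap i b j)) (y (Equiv.swap i b j))
  left_inv x := by
    funext j
    dsimp only
    rw [Equiv.swap_apply_self, Equiv.swap_apply_self]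
  right_inv y := by
    funext j
    dsimp only
    rw [Equiv.swap_apply_self, Equiv.swap_apply_self]

lemma hamAut_apply (i b : Fin d) (v w : Fin d → Fin n) (x : Fin d → Fin n) (j : Fin d) :
    hamAut i b v w x j = Equiv.swap (v (Equiv.swap i b j)) (w j) (x (Equiv.swap i b j)) := rfl

lemma hamAut_v (i b : Fin d) (v w : Fin d → Fin n) : hamAut i b v w v = w := by
  funext j
  rw [hamAut_apply, Equiv.swap_apply_left]

lemma hamAut_ne_iff (i b : Fin d) (v w x y : Fin d → Fin n) (j : Fin d) :
    hamAut i b v w x j ≠ hamAut i b v w y j ↔ x (Equiv.swap i b j) ≠ y (Equiv.swap i b j) := by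
  rw [hamAut_apply, hamAut_apply]
  exact (Equiv.swap _ _).injective.ne_iff

lemma card_filter_swap (τ : Fin d ≃ Fin d) (P : Fin d → Prop) [DecidablePred P] :
    (Finset.univ.filter fun j => P (τ j)).card = (Finset.univ.filter P).card := by
  apply Finset.card_bij (fun j _ => τ j)
  · intro a ha
    simp only [Finset.mem_filter, Finset.mem_univ, true_and] at ha ⊢
    exact ha
  · intro a ha b hb hab
    exact τ.injective hab
  · intro c hc
    refine ⟨τ.symm c, ?_, by simp⟩
    simp only [Finset.mem_filter, Finset.mem_univ, true_and, Equiv.apply_symm_apply] at hc ⊢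
    exact hc

lemma hamAut_adj (i b : Fin d) (v w : Fin d → Fin n) (x y : Fin d → Fin n) :
    (hamming d n).Adj (hamAut i b v w x) (hamAut i b v w y) ↔ (hamming d n).Adj x y := by
  show (Finset.univ.filter fun j => hamAut i b v w x j ≠ hamAut i b v w y j).card = 1
    ↔ (Finset.univ.filter fun j => x j ≠ y j).card = 1
  have h1 : (Finset.univ.filter fun j => hamAut i b v w x j ≠ hamAut i b v w y j)
      = (Finset.univ.filter fun j => x (Equiv.swap i b j) ≠ y (Equiv.swap i b j)) := by
    apply Finset.filter_congr
    intro j _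
    exact hamAut_ne_iff i b v w x y j
  rw [h1, card_filter_swap (Equiv.swap i b) (fun j => x j ≠ y j)]

lemma hamAut_line_adj (i b : Fin d) (v w : Fin d → Fin n) (x y : Fin d → Fin n) :
    (lineGraph d n b w).Adj (hamAut i b v w x) (hamAut i b v w y)
      ↔ (lineGraph d n i v).Adj x y := by
  have hcoord : ∀ z : Fin d → Fin n,
      (∀ j ≠ b, hamAut i b v w z j = w j) ↔ (∀ j ≠ i, z j = v j) := by
    intro z
    constructor
    · intro h j hj
      have hb : Equiv.swap i b j ≠ b := by
        intro hc
        apply hj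
        have := congrArg (Equiv.swap i b) hc
        rwa [Equiv.swap_apply_self, Equiv.swap_apply_right] at this
      have h2 := h (Equiv.swap i b j) hb
      rw [hamAut_apply, Equiv.swap_apply_self] at h2
      exact (Equiv.swap (v j) (w (Equiv.swap i b j))).injective
        (h2.trans (Equiv.swap_apply_left (v j) (w (Equiv.swap i b j))).symm)
    · intro h j hj
      rw [hamAut_apply]
      have hij : Equiv.swap i b j ≠ i := by
        intro hc
        apply hj
        have := congrArg (Equiv.swap i b) hc
        rwa [Equiv.swap_apply_self, Equiv.swap_apply_left] at this
      rw [h (Equiv.swap i b j) hij, Equiv.swap_apply_left]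
  constructor
  · rintro ⟨h1, h2, h3⟩
    exact ⟨(hamAut_adj i b v w x y).mp h1, (hcoord x).mp h2, (hcoord y).mp h3⟩
  · rintro ⟨h1, h2, h3⟩
    exact ⟨(hamAut_adj i b v w x y).mpr h1, (hcoord x).mpr h2, (hcoord y).mpr h3⟩

end HamAux

namespace HamAux
open Perc PercAux
set_option linter.unusedSectionVars false

variable {d n : ℕ}

def lineIso (i b : Fin d) (v w : Fin d → Fin n) (ω : Perc.Config (Fin d → Fin n)) :
    Perc.openGraph (lineGraph d n i v) (fun e => ω (Sym2.map (hamAut i b v w) e)) ≃g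
      Perc.openGraph (lineGraph d n b w) ω where
  toEquiv := hamAut i b v w
  map_rel_iff' := by
    intro x y
    show (Perc.openGraph (lineGraph d n b w) ω).Adj (hamAut i b v w x) (hamAut i b v w y)
      ↔ (Perc.openGraph (lineGraph d n i v) (fun e => ω (Sym2.map (hamAut i b v w) e))).Adj x y
    show (lineGraph d n b w).Adj (hamAut i b v w x) (hamAut i b v w y) ∧ _
      ↔ (lineGraph d n i v).Adj x y ∧ _
    rw [hamAut_line_adj]
    simp only [Sym2.map_pair_eq]

lemma mem_cluster_relabel (p : ℝ) (i b : Fin d) (v w : Fin d → Fin n)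
    (ω : Perc.Config (Fin d → Fin n)) (y : Fin d → Fin n) :
    y ∈ clusterF (lineGraph d n i v) (fun e => ω (Sym2.map (hamAut i b v w) e)) v
      ↔ hamAut i b v w y ∈ clusterF (lineGraph d n b w) ω w := by
  rw [mem_clusterF, mem_clusterF]
  have hre := SimpleGraph.Iso.reachable_iff (φ := lineIso i b v w ω) (u := v) (v := y)
  rw [show (lineIso i b v w ω) v = hamAut i b v w v from rfl, hamAut_v] at hre
  exact hre.symm

set_option maxHeartbeats 2000000 in
lemma expect_card_line_cluster (p : ℝ) (i b : Fin d) (v w : Fin d → Fin n) :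
    Perc.expect (hamming d n) p (fun ω => ((clusterF (lineGraph d n b w) ω w).card : ℝ))
      = lineChi d n p i v := by
  have hrel := PercAux.expect_relabel (hamming d n) p (hamAut i b v w)
      (hamAut_adj i b v w) (fun ω => ((clusterF (lineGraph d n i v) ω v).card : ℝ))
  have hχ : lineChi d n p i v = Perc.expect (hamming d n) p
      (fun ω => ((clusterF (lineGraph d n i v) ω v).card : ℝ)) := rfl
  rw [hχ, ← hrel]
  unfold Perc.expect
  apply Finset.sum_congr rfl
  intro ω _
  dsimp only
  congr 1
  norm_cast
  apply Finset.card_bij (fun y _ => (hamAut i b v w).symm y)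
  · intro a ha
    apply (mem_cluster_relabel p i b v w ω _).mpr
    rwa [Equiv.apply_symm_apply]
  · intro a _ a' _ hab
    exact (hamAut i b v w).symm.injective hab
  · intro c hc
    exact ⟨hamAut i b v w c, (mem_cluster_relabel p i b v w ω c).mp hc,
      Equiv.symm_apply_apply _ _⟩

end HamAux

namespace HamAux
open Perc PercAux
set_option linter.unusedSectionVars false

variable {d n : ℕ}

/-- Vertices counted in the branching recursion: joined to `w` by an open path whose first
edge goes in direction `b` and whose non-initial vertices avoid `A ∪ {w}`. -/
def NBset (d n : ℕ) (w : Fin d → Fin n) (b : Fin d) (A : Finset (Fin d → Fin n))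
    (ω : Perc.Config (Fin d → Fin n)) : Finset (Fin d → Fin n) :=
  Finset.univ.filter fun y => y ≠ w ∧ ∃ z, (lineGraph d n b w).Adj w z ∧ ω s(w, z) = true ∧
    z ∉ A ∧ (Perc.openGraph (restrictG (hamming d n) (insert w A)ᶜ) ω).Reachable z y

/-- The cluster of `w` within its `b`-line, avoiding `A` (except at `w`). -/
def RRset (d n : ℕ) (w : Fin d → Fin n) (b : Fin d) (A : Finset (Fin d → Fin n))
    (ω : Perc.Config (Fin d → Fin n)) : Finset (Fin d → Fin n) :=
  clusterF (restrictG (lineGraph d n b w) (insert w Aᶜ)) ω w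

lemma w_mem_RRset (w : Fin d → Fin n) (b : Fin d) (A : Finset (Fin d → Fin n))
    (ω : Perc.Config (Fin d → Fin n)) : w ∈ RRset d n w b A ω := self_mem_clusterF

lemma RRset_subset (w : Fin d → Fin n) (b : Fin d) (A : Finset (Fin d → Fin n))
    (ω : Perc.Config (Fin d → Fin n)) : RRset d n w b A ω ⊆ insert w Aᶜ := by
  intro x hx
  rcases exists_adj_of_reachable (mem_clusterF.mp hx) with rfl | ⟨z, hz⟩
  · exact Finset.mem_insert_self _ _
  · exact hz.1.2.2

lemma RRset_line {w : Fin d → Fin n} {b : Fin d} {A : Finset (Fin d → Fin n)}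
    {ω : Perc.Config (Fin d → Fin n)} {x : Fin d → Fin n} (hx : x ∈ RRset d n w b A ω) :
    ∀ j ≠ b, x j = w j := by
  refine reachable_line_mem ?_ (mem_clusterF.mp hx)
  intro a a' h
  exact h.1

lemma RRset_subset_line (w : Fin d → Fin n) (b : Fin d) (A : Finset (Fin d → Fin n))
    (ω : Perc.Config (Fin d → Fin n)) :
    RRset d n w b A ω ⊆ clusterF (lineGraph d n b w) ω w := by
  refine clusterF_mono ?_ ω w
  intro a a' h
  exact h.1

/-- The recursion-level decomposition. -/
lemma NB_decomp (w : Fin d → Fin n) (b : Fin d) (A : Finset (Fin d → Fin n))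
    (ω : Perc.Config (Fin d → Fin n)) :
    NBset d n w b A ω ⊆ (RRset d n w b A ω).erase w ∪
      ((RRset d n w b A ω).erase w).biUnion (fun w₂ =>
        (Finset.univ.filter (fun c => c ≠ b)).biUnion (fun c =>
          NBset d n w₂ c (A ∪ RRset d n w b A ω) ω)) := by
  intro y hy
  obtain ⟨-, hyw, z, hlz, hωz, hzA, hreach⟩ := Finset.mem_filter.mp hy
  set S := RRset d n w b A ω with hS
  have hzw : z ≠ w := hlz.1.ne'
  have hzX : z ∈ (insert w A)ᶜ := by
    rw [Finset.mem_compl, Finset.mem_insert]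
    push_neg
    exact ⟨hzw, hzA⟩
  have hzS : z ∈ S := by
    apply mem_clusterF.mpr
    apply SimpleGraph.Adj.reachable
    refine ⟨⟨hlz, Finset.mem_insert_self _ _, ?_⟩, hωz⟩
    exact Finset.mem_insert_of_mem (Finset.mem_compl.mpr hzA)
  obtain ⟨q⟩ := hreach
  have hsupp : ∀ x ∈ q.support, x ∈ (insert w A)ᶜ := support_mem_restrict q hzX
  by_cases hyS : y ∈ S
  · exact Finset.mem_union_left _ (Finset.mem_erase.mpr ⟨hyw, hyS⟩)
  · rcases exit_walk S q hyS with hall | ⟨w₂, z₂, hw₂S, hz₂S, hadj₂, q', hq'⟩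
    · exact absurd hzS (hall z q.start_mem_support)
    · have hw₂X : w₂ ∈ (insert w A)ᶜ := hadj₂.1.2.1
      have hz₂X : z₂ ∈ (insert w A)ᶜ := hadj₂.1.2.2
      have hw₂w : w₂ ≠ w := by
        have := Finset.mem_compl.mp hw₂X
        rw [Finset.mem_insert] at this
        push_neg at this
        exact this.1
      have hw₂A : w₂ ∉ A := by
        have := Finset.mem_compl.mp hw₂X
        rw [Finset.mem_insert] at this
        push_neg at this
        exact this.2
      have hz₂A : z₂ ∉ A := by
        have := Finset.mem_compl.mp hz₂X
        rw [Finset.mem_insert] at this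
        push_neg at this
        exact this.2
      obtain ⟨c, hlc⟩ := adj_line_dir hadj₂.1.1
      have hcb : c ≠ b := by
        rintro rfl
        apply hz₂S
        refine clusterF_closed hw₂S ⟨⟨?_, RRset_subset w c A ω hw₂S, ?_⟩, hadj₂.2⟩
        · refine ⟨hadj₂.1.1, fun j hj => RRset_line hw₂S j hj, fun j hj => ?_⟩
          have h1 := line_edge_diff hlc
          exact (h1.2 j hj).symm.trans (RRset_line hw₂S j hj)
        · exact Finset.mem_insert_of_mem (Finset.mem_compl.mpr hz₂A)
      apply Finset.mem_union_right
      apply Finset.mem_biUnion.mpr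
      refine ⟨w₂, Finset.mem_erase.mpr ⟨hw₂w, hw₂S⟩, ?_⟩
      apply Finset.mem_biUnion.mpr
      refine ⟨c, Finset.mem_filter.mpr ⟨Finset.mem_univ _, hcb⟩, ?_⟩
      have hyq' : y ∉ S := hq' y q'.end_mem_support
      apply Finset.mem_filter.mpr
      refine ⟨Finset.mem_univ _, ?_, z₂, hlc, hadj₂.2, ?_, ?_⟩
      · intro h; rw [h] at hyq'; exact hyq' hw₂S
      · rw [Finset.mem_union]
        push_neg
        exact ⟨hz₂A, hz₂S⟩
      · refine reachable_transfer (P := fun x => x ∈ (insert w A)ᶜ ∧ x ∉ S)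
          ?_ q' (fun x hx => ⟨support_mem_restrict q' hz₂X x hx, hq' x hx⟩)
        intro a a' ha hPa hPa'
        refine ⟨⟨ha.1.1, ?_, ?_⟩, ha.2⟩
        · rw [Finset.mem_compl, Finset.mem_insert]
          push_neg
          refine ⟨fun h => (h ▸ hPa.2) hw₂S, ?_⟩
          rw [Finset.mem_union]
          push_neg
          have := Finset.mem_compl.mp hPa.1
          rw [Finset.mem_insert] at this
          push_neg at this
          exact ⟨this.2, hPa.2⟩
        · rw [Finset.mem_compl, Finset.mem_insert]
          push_neg
          refine ⟨fun h => (h ▸ hPa'.2) hw₂S, ?_⟩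
          rw [Finset.mem_union]
          push_neg
          have := Finset.mem_compl.mp hPa'.1
          rw [Finset.mem_insert] at this
          push_neg at this
          exact ⟨this.2, hPa'.2⟩

end HamAux

namespace HamAux
open Perc PercAux
set_option linter.unusedSectionVars false

variable {d n : ℕ}

/-- Top-level decomposition of the full cluster. -/
lemma cluster_decomp (v : Fin d → Fin n) (i : Fin d) (ω : Perc.Config (Fin d → Fin n)) :
    Perc.cluster (hamming d n) ω v ⊆ clusterF (lineGraph d n i v) ω v ∪
      (clusterF (lineGraph d n i v) ω v).biUnion (fun w₂ =>
        (Finset.univ.filter (fun c => c ≠ i)).biUnion (fun c =>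
          NBset d n w₂ c (clusterF (lineGraph d n i v) ω v) ω)) := by
  intro y hy
  set S := clusterF (lineGraph d n i v) ω v with hS
  have hreach : (Perc.openGraph (hamming d n) ω).Reachable v y :=
    (Finset.mem_filter.mp hy).2
  obtain ⟨q⟩ := hreach
  by_cases hyS : y ∈ S
  · exact Finset.mem_union_left _ hyS
  · rcases exit_walk S q hyS with hall | ⟨w₂, z₂, hw₂S, hz₂S, hadj₂, q', hq'⟩
    · exact absurd self_mem_clusterF (hall v q.start_mem_support)
    · obtain ⟨c, hlc⟩ := adj_line_dir hadj₂.1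
      have hvline : ∀ x ∈ S, ∀ j ≠ i, x j = v j := fun x hx =>
        reachable_line_mem (le_refl _) (mem_clusterF.mp hx)
      have hci : c ≠ i := by
        rintro rfl
        apply hz₂S
        refine clusterF_closed hw₂S
          ⟨⟨hadj₂.1, fun j hj => hvline w₂ hw₂S j hj, fun j hj => ?_⟩, hadj₂.2⟩
        exact ((line_edge_diff hlc).2 j hj).symm.trans (hvline w₂ hw₂S j hj)
      apply Finset.mem_union_right
      apply Finset.mem_biUnion.mpr
      refine ⟨w₂, hw₂S, ?_⟩
      apply Finset.mem_biUnion.mpr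
      refine ⟨c, Finset.mem_filter.mpr ⟨Finset.mem_univ _, hci⟩, ?_⟩
      have hyq' : y ∉ S := hq' y q'.end_mem_support
      apply Finset.mem_filter.mpr
      refine ⟨Finset.mem_univ _, fun h => (h ▸ hyq') hw₂S, z₂, hlc, hadj₂.2, hz₂S, ?_⟩
      refine reachable_transfer (P := fun x => x ∉ S) ?_ q' hq'
      intro a a' ha hPa hPa'
      refine ⟨⟨ha.1, ?_, ?_⟩, ha.2⟩
      · rw [Finset.mem_compl, Finset.mem_insert]
        push_neg
        exact ⟨fun h => (h ▸ hPa) hw₂S, hPa⟩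
      · rw [Finset.mem_compl, Finset.mem_insert]
        push_neg
        exact ⟨fun h => (h ▸ hPa') hw₂S, hPa'⟩

/-- The set of edges of the `b`-line through `w` touching `S`. -/
def DD (d n : ℕ) (b : Fin d) (w : Fin d → Fin n) (S : Finset (Fin d → Fin n)) :
    Set (Sym2 (Fin d → Fin n)) :=
  {e | e ∈ (lineGraph d n b w).edgeSet ∧ ∃ x ∈ S, x ∈ e}

lemma cluster_det {L G₀ : SimpleGraph (Fin d → Fin n)} (hG₀ : G₀ ≤ L) {w : Fin d → Fin n}
    {S : Finset (Fin d → Fin n)} {ω₁ ω₂ : Perc.Config (Fin d → Fin n)}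
    (h : ∀ e, (e ∈ L.edgeSet ∧ ∃ x ∈ S, x ∈ e) → ω₁ e = ω₂ e)
    (h1 : clusterF G₀ ω₁ w = S) : clusterF G₀ ω₂ w = S := by
  rw [← h1]
  apply clusterF_eq_of_agree
  intro x y hxy hx
  exact h s(x, y) ⟨(L.mem_edgeSet).mpr (hG₀ hxy), ⟨x, h1 ▸ hx, Sym2.mem_mk_left x y⟩⟩

lemma RR_det (w : Fin d → Fin n) (b : Fin d) (A : Finset (Fin d → Fin n))
    (S : Finset (Fin d → Fin n)) {ω₁ ω₂ : Perc.Config (Fin d → Fin n)}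
    (h : ∀ e ∈ DD d n b w S, ω₁ e = ω₂ e) :
    RRset d n w b A ω₁ = S ↔ RRset d n w b A ω₂ = S := by
  have hle : restrictG (lineGraph d n b w) (insert w Aᶜ) ≤ lineGraph d n b w := by
    intro a a' ha
    exact ha.1
  constructor
  · exact fun h1 => cluster_det hle (fun e he => h e he) h1
  · exact fun h1 => cluster_det hle (fun e he => (h e he).symm) h1

lemma R0_det (v : Fin d → Fin n) (i : Fin d)
    (S : Finset (Fin d → Fin n)) {ω₁ ω₂ : Perc.Config (Fin d → Fin n)}
    (h : ∀ e ∈ DD d n i v S, ω₁ e = ω₂ e) :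
    clusterF (lineGraph d n i v) ω₁ v = S ↔ clusterF (lineGraph d n i v) ω₂ v = S := by
  constructor
  · exact fun h1 => cluster_det (le_refl _) (fun e he => h e he) h1
  · exact fun h1 => cluster_det (le_refl _) (fun e he => (h e he).symm) h1

lemma NB_det {b : Fin d} {w : Fin d → Fin n} {S : Finset (Fin d → Fin n)}
    (w₂ : Fin d → Fin n) {c : Fin d} (hcb : c ≠ b) (B : Finset (Fin d → Fin n)) (hSB : S ⊆ B)
    {ω₁ ω₂ : Perc.Config (Fin d → Fin n)}
    (h : ∀ e, e ∉ DD d n b w S → ω₁ e = ω₂ e) :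
    NBset d n w₂ c B ω₁ = NBset d n w₂ c B ω₂ := by
  have hedge : ∀ z : Fin d → Fin n, (lineGraph d n c w₂).Adj w₂ z → s(w₂, z) ∉ DD d n b w S := by
    intro z hlz hmem
    have h1 := line_edge_diff (((lineGraph d n b w).mem_edgeSet).mp hmem.1)
    have h2 := line_edge_diff hlz
    exact h1.1 (h2.2 b (fun hb => hcb hb.symm))
  have hgraph : Perc.openGraph (restrictG (hamming d n) (insert w₂ B)ᶜ) ω₁
      = Perc.openGraph (restrictG (hamming d n) (insert w₂ B)ᶜ) ω₂ := by
    ext x y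
    have hagree : x ∈ (insert w₂ B)ᶜ → y ∈ (insert w₂ B)ᶜ → ω₁ s(x, y) = ω₂ s(x, y) := by
      intro hx hy
      apply h
      intro hmem
      obtain ⟨-, x', hx'S, hx'e⟩ := hmem
      rcases Sym2.mem_iff.mp hx'e with rfl | rfl
      · have := Finset.mem_compl.mp hx
        rw [Finset.mem_insert] at this
        push_neg at this
        exact this.2 (hSB hx'S)
      · have := Finset.mem_compl.mp hy
        rw [Finset.mem_insert] at this
        push_neg at this
        exact this.2 (hSB hx'S)
    constructor
    · rintro ⟨ha, hω⟩
      exact ⟨ha, by rw [← hagree ha.2.1 ha.2.2]; exact hω⟩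
    · rintro ⟨ha, hω⟩
      exact ⟨ha, by rw [hagree ha.2.1 ha.2.2]; exact hω⟩
  unfold NBset
  apply Finset.filter_congr
  intro y _
  constructor
  · rintro ⟨hyw, z, hlz, hω, hzB, hre⟩
    refine ⟨hyw, z, hlz, ?_, hzB, hgraph ▸ hre⟩
    rw [← h s(w₂, z) (hedge z hlz)]
    exact hω
  · rintro ⟨hyw, z, hlz, hω, hzB, hre⟩
    refine ⟨hyw, z, hlz, ?_, hzB, hgraph ▸ hre⟩
    rw [h s(w₂, z) (hedge z hlz)]
    exact hω

end HamAux

namespace PercAux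
set_option linter.unusedSectionVars false
variable {V : Type*} [Fintype V] [DecidableEq V]

lemma expect_mul_const (G : SimpleGraph V) (p : ℝ) (f : Perc.Config V → ℝ) (c : ℝ) :
    Perc.expect G p (fun ω => f ω * c) = Perc.expect G p f * c := by
  unfold Perc.expect
  rw [Finset.sum_mul]
  exact Finset.sum_congr rfl fun ω _ => by ring

end PercAux

namespace HamAux
open Perc PercAux
set_option linter.unusedSectionVars false

variable {d n : ℕ}

lemma one_le_lineChi (d n : ℕ) (p : ℝ) (hp0 : 0 ≤ p) (hp1 : p ≤ 1)
    (i : Fin d) (v : Fin d → Fin n) : 1 ≤ lineChi d n p i v := by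
  have h0 : lineChi d n p i v = Perc.expect (hamming d n) p
      (fun ω => ((clusterF (lineGraph d n i v) ω v).card : ℝ)) := rfl
  rw [h0, ← expect_const (hamming d n) p 1]
  apply expect_mono _ hp0 hp1
  intro ω
  have hpos : 0 < (clusterF (lineGraph d n i v) ω v).card :=
    Finset.card_pos.mpr ⟨v, self_mem_clusterF⟩
  exact_mod_cast hpos

lemma expect_RR_erase_le (p : ℝ) (hp0 : 0 ≤ p) (hp1 : p ≤ 1)
    (i : Fin d) (v : Fin d → Fin n) (w : Fin d → Fin n) (b : Fin d)
    (A : Finset (Fin d → Fin n)) :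
    Perc.expect (hamming d n) p (fun ω => ((((RRset d n w b A ω).erase w).card : ℕ) : ℝ))
      ≤ lineChi d n p i v - 1 := by
  have hpt : ∀ ω : Perc.Config (Fin d → Fin n),
      ((((RRset d n w b A ω).erase w).card : ℕ) : ℝ)
        ≤ ((clusterF (lineGraph d n b w) ω w).card : ℝ) + (-1) := by
    intro ω
    rw [Finset.card_erase_of_mem (w_mem_RRset w b A ω)]
    have hsub := Finset.card_le_card (RRset_subset_line w b A ω)
    have hone : 1 ≤ (RRset d n w b A ω).card :=
      Finset.card_pos.mpr ⟨w, w_mem_RRset w b A ω⟩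
    rw [Nat.cast_sub hone, Nat.cast_one]
    have : ((RRset d n w b A ω).card : ℝ) ≤ ((clusterF (lineGraph d n b w) ω w).card : ℝ) := by
      exact_mod_cast hsub
    linarith
  calc Perc.expect (hamming d n) p (fun ω => ((((RRset d n w b A ω).erase w).card : ℕ) : ℝ))
      ≤ Perc.expect (hamming d n) p
          (fun ω => ((clusterF (lineGraph d n b w) ω w).card : ℝ) + (-1)) :=
        expect_mono _ hp0 hp1 hpt
    _ = lineChi d n p i v - 1 := by
        rw [expect_add, expect_const, expect_card_line_cluster p i b v w]
        ring

end HamAux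

namespace HamAux
open Perc PercAux
set_option linter.unusedSectionVars false
set_option maxHeartbeats 2000000

variable {d n : ℕ}

/-- The inner double sum in the branching recursion. -/
def FSfun (d n : ℕ) (w : Fin d → Fin n) (b : Fin d) (A : Finset (Fin d → Fin n))
    (S : Finset (Fin d → Fin n)) : Perc.Config (Fin d → Fin n) → ℝ :=
  fun ω => ∑ w₂ ∈ S.erase w, ∑ c ∈ Finset.univ.filter (fun c => c ≠ b),
    ((NBset d n w₂ c (A ∪ S) ω).card : ℝ)

/-- Indicator that the line cluster equals `S`. -/
def INDfun (d n : ℕ) (w : Fin d → Fin n) (b : Fin d) (A : Finset (Fin d → Fin n))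
    (S : Finset (Fin d → Fin n)) : Perc.Config (Fin d → Fin n) → ℝ :=
  fun ω => if RRset d n w b A ω = S then (1:ℝ) else 0

lemma card_dirs (d : ℕ) (hd : 1 ≤ d) (b : Fin d) :
    (((Finset.univ : Finset (Fin d)).filter (fun c => c ≠ b)).card : ℝ) = (d:ℝ) - 1 := by
  rw [Finset.filter_ne', Finset.card_erase_of_mem (Finset.mem_univ b)]
  rw [Finset.card_univ, Fintype.card_fin]
  rw [Nat.cast_sub hd, Nat.cast_one]

lemma NB_expect_le (d n : ℕ) (hd : 2 ≤ d) (p : ℝ) (hp0 : 0 ≤ p) (hp1 : p ≤ 1)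
    (i : Fin d) (v : Fin d → Fin n)
    (hr : ((d:ℝ)-1) * (lineChi d n p i v - 1) < 1) :
    ∀ k : ℕ, ∀ A : Finset (Fin d → Fin n), Aᶜ.card ≤ k → ∀ (w : Fin d → Fin n) (b : Fin d),
      Perc.expect (hamming d n) p (fun ω => ((NBset d n w b A ω).card : ℝ))
        ≤ (lineChi d n p i v - 1) / (1 - ((d:ℝ)-1) * (lineChi d n p i v - 1)) := by
  have hχ1 : 1 ≤ lineChi d n p i v := one_le_lineChi d n p hp0 hp1 i v
  have hd1 : (1:ℝ) ≤ (d:ℝ) := by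
    have : (1:ℕ) ≤ d := by omega
    exact_mod_cast this
  have hr0 : 0 ≤ ((d:ℝ)-1) * (lineChi d n p i v - 1) :=
    mul_nonneg (by linarith) (by linarith)
  have h1r : 0 < 1 - ((d:ℝ)-1) * (lineChi d n p i v - 1) := by linarith
  have hM0 : 0 ≤ (lineChi d n p i v - 1) / (1 - ((d:ℝ)-1) * (lineChi d n p i v - 1)) :=
    div_nonneg (by linarith) (le_of_lt h1r)
  intro k
  induction k with
  | zero =>
      intro A hA w b
      have hAuniv : A = Finset.univ := by
        have h0 : Aᶜ = ∅ := Finset.card_eq_zero.mp (Nat.le_zero.mp hA)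
        rwa [Finset.compl_eq_empty_iff] at h0
      have hempty : ∀ ω : Perc.Config (Fin d → Fin n), NBset d n w b A ω = ∅ := by
        intro ω
        apply Finset.eq_empty_of_forall_notMem
        intro y hy
        obtain ⟨-, -, z, -, -, hzA, -⟩ := Finset.mem_filter.mp hy
        exact hzA (hAuniv ▸ Finset.mem_univ z)
      have hzero : Perc.expect (hamming d n) p
          (fun ω => ((NBset d n w b A ω).card : ℝ)) = 0 := by
        rw [show (fun ω => ((NBset d n w b A ω).card : ℝ)) = fun _ => (0:ℝ) from
          funext fun ω => by rw [hempty ω]; simp]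
        exact expect_const _ _ 0
      rw [hzero]
      exact hM0
  | succ k ih =>
      intro A hA w b
      set χ := lineChi d n p i v with hχdef
      set M := (χ - 1) / (1 - ((d:ℝ)-1) * (χ - 1)) with hMdef
      set 𝒮 := (Finset.univ : Finset (Finset (Fin d → Fin n))).filter
        (fun S => w ∈ S ∧ ∀ x ∈ S.erase w, x ∉ A) with hSdef
      have hRSmem : ∀ ω : Perc.Config (Fin d → Fin n), RRset d n w b A ω ∈ 𝒮 := by
        intro ω
        rw [hSdef, Finset.mem_filter]
        refine ⟨Finset.mem_univ _, w_mem_RRset w b A ω, ?_⟩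
        intro x hx
        obtain ⟨hxw, hxR⟩ := Finset.mem_erase.mp hx
        have hmem := RRset_subset w b A ω hxR
        rw [Finset.mem_insert] at hmem
        rcases hmem with h1 | h1
        · exact absurd h1 hxw
        · exact Finset.mem_compl.mp h1
      -- pointwise bound
      have hpoint : ∀ ω : Perc.Config (Fin d → Fin n),
          ((NBset d n w b A ω).card : ℝ)
            ≤ ((((RRset d n w b A ω).erase w).card : ℕ) : ℝ)
              + ∑ S ∈ 𝒮, INDfun d n w b A S ω * FSfun d n w b A S ω := by
        intro ω
        have hsum : ∑ S ∈ 𝒮, INDfun d n w b A S ω * FSfun d n w b A S ω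
            = FSfun d n w b A (RRset d n w b A ω) ω := by
          rw [Finset.sum_eq_single_of_mem (RRset d n w b A ω) (hRSmem ω)]
          · rw [INDfun, if_pos rfl, one_mul]
          · intro S hS hne
            rw [INDfun, if_neg (fun h => hne h.symm), zero_mul]
        rw [hsum]
        have hnat : (NBset d n w b A ω).card ≤ ((RRset d n w b A ω).erase w).card
            + ∑ w₂ ∈ (RRset d n w b A ω).erase w,
                ∑ c ∈ Finset.univ.filter (fun c => c ≠ b),
                  (NBset d n w₂ c (A ∪ RRset d n w b A ω) ω).card := by
          have h1 := Finset.card_le_card (NB_decomp w b A ω)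
          have h2 := Finset.card_union_le ((RRset d n w b A ω).erase w)
            (((RRset d n w b A ω).erase w).biUnion (fun w₂ =>
              (Finset.univ.filter (fun c => c ≠ b)).biUnion (fun c =>
                NBset d n w₂ c (A ∪ RRset d n w b A ω) ω)))
          have h3 := Finset.card_biUnion_le (s := (RRset d n w b A ω).erase w)
            (t := fun w₂ => (Finset.univ.filter (fun c => c ≠ b)).biUnion (fun c =>
                NBset d n w₂ c (A ∪ RRset d n w b A ω) ω))
          have h4 : ∑ w₂ ∈ (RRset d n w b A ω).erase w,
              ((Finset.univ.filter (fun c => c ≠ b)).biUnion (fun c =>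
                NBset d n w₂ c (A ∪ RRset d n w b A ω) ω)).card
              ≤ ∑ w₂ ∈ (RRset d n w b A ω).erase w,
                  ∑ c ∈ Finset.univ.filter (fun c => c ≠ b),
                    (NBset d n w₂ c (A ∪ RRset d n w b A ω) ω).card :=
            Finset.sum_le_sum (fun w₂ _ => Finset.card_biUnion_le)
          omega
        rw [FSfun]
        push_cast
        exact_mod_cast hnat
      -- factorization
      have hfact : ∀ S ∈ 𝒮,
          Perc.expect (hamming d n) p (fun ω => INDfun d n w b A S ω * FSfun d n w b A S ω)
            = Perc.expect (hamming d n) p (INDfun d n w b A S)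
              * Perc.expect (hamming d n) p (FSfun d n w b A S) := by
        intro S hS
        apply expect_mul_of_determined (hamming d n) p (DD d n b w S)
        · intro ω₁ ω₂ hagree
          unfold INDfun
          by_cases h1 : RRset d n w b A ω₁ = S
          · rw [if_pos h1, if_pos ((RR_det w b A S hagree).mp h1)]
          · rw [if_neg h1, if_neg (fun h2 => h1 ((RR_det w b A S hagree).mpr h2))]
        · intro ω₁ ω₂ hagree
          unfold FSfun
          apply Finset.sum_congr rfl
          intro w₂ _
          apply Finset.sum_congr rfl
          intro c hc
          rw [NB_det w₂ (Finset.mem_filter.mp hc).2 (A ∪ S) Finset.subset_union_right hagree]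
      -- induction hypothesis bound
      have hIH : ∀ S ∈ 𝒮, Perc.expect (hamming d n) p (FSfun d n w b A S)
          ≤ ((S.erase w).card : ℝ) * (((d:ℝ)-1) * M) := by
        intro S hS
        unfold FSfun
        rw [expect_sum]
        have hbound : ∀ w₂ ∈ S.erase w,
            Perc.expect (hamming d n) p (fun ω =>
              ∑ c ∈ Finset.univ.filter (fun c => c ≠ b),
                ((NBset d n w₂ c (A ∪ S) ω).card : ℝ)) ≤ ((d:ℝ)-1) * M := by
          intro w₂ hw₂
          rw [expect_sum]
          have hA' : (A ∪ S)ᶜ.card ≤ k := by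
            obtain ⟨hw₂w, hw₂S⟩ := Finset.mem_erase.mp hw₂
            have hw₂A : w₂ ∉ A := by
              rw [hSdef, Finset.mem_filter] at hS
              exact hS.2.2 w₂ (Finset.mem_erase.mpr ⟨hw₂w, hw₂S⟩)
            have hsub : (A ∪ S)ᶜ ⊆ Aᶜ.erase w₂ := by
              intro x hx
              rw [Finset.mem_compl, Finset.mem_union] at hx
              push_neg at hx
              exact Finset.mem_erase.mpr
                ⟨fun h => hx.2 (h ▸ hw₂S), Finset.mem_compl.mpr hx.1⟩
            have h1 := Finset.card_le_card hsub
            have h2 : w₂ ∈ Aᶜ := Finset.mem_compl.mpr hw₂A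
            have h3 := Finset.card_erase_of_mem h2
            have h4 : 1 ≤ Aᶜ.card := Finset.card_pos.mpr ⟨w₂, h2⟩
            omega
          calc ∑ c ∈ Finset.univ.filter (fun c => c ≠ b),
              Perc.expect (hamming d n) p (fun ω => ((NBset d n w₂ c (A ∪ S) ω).card : ℝ))
              ≤ ∑ c ∈ Finset.univ.filter (fun c => c ≠ b), M :=
                Finset.sum_le_sum (fun c _ => ih (A ∪ S) hA' w₂ c)
            _ = (((Finset.univ.filter (fun c : Fin d => c ≠ b)).card : ℝ)) * M := by
                rw [Finset.sum_const, nsmul_eq_mul]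
            _ = ((d:ℝ)-1) * M := by rw [card_dirs d (by omega) b]
        calc ∑ w₂ ∈ S.erase w, Perc.expect (hamming d n) p (fun ω =>
              ∑ c ∈ Finset.univ.filter (fun c => c ≠ b),
                ((NBset d n w₂ c (A ∪ S) ω).card : ℝ))
            ≤ ∑ w₂ ∈ S.erase w, ((d:ℝ)-1) * M := Finset.sum_le_sum hbound
          _ = ((S.erase w).card : ℝ) * (((d:ℝ)-1) * M) := by
              rw [Finset.sum_const, nsmul_eq_mul]
      -- partition identity
      have hpart : ∑ S ∈ 𝒮, Perc.expect (hamming d n) p (INDfun d n w b A S)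
            * ((S.erase w).card : ℝ)
          = Perc.expect (hamming d n) p
              (fun ω => ((((RRset d n w b A ω).erase w).card : ℕ) : ℝ)) := by
        have hstep : ∀ S ∈ 𝒮, Perc.expect (hamming d n) p (INDfun d n w b A S)
              * ((S.erase w).card : ℝ)
            = Perc.expect (hamming d n) p
                (fun ω => INDfun d n w b A S ω * ((S.erase w).card : ℝ)) :=
          fun S _ => (expect_mul_const _ _ _ _).symm
        rw [Finset.sum_congr rfl hstep, ← expect_sum]
        congr 1
        funext ω
        rw [Finset.sum_eq_single_of_mem (RRset d n w b A ω) (hRSmem ω)]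
        · rw [INDfun, if_pos rfl, one_mul]
        · intro S hS hne
          rw [INDfun, if_neg (fun h => hne h.symm), zero_mul]
      -- assembling
      have hind_nonneg : ∀ S ∈ 𝒮, 0 ≤ Perc.expect (hamming d n) p (INDfun d n w b A S) := by
        intro S _
        apply expect_nonneg _ hp0 hp1
        intro ω
        unfold INDfun
        split_ifs <;> norm_num
      have hEerase := expect_RR_erase_le p hp0 hp1 i v w b A
      have hdM0 : 0 ≤ ((d:ℝ)-1) * M := mul_nonneg (by linarith) hM0
      have halg : (χ - 1) + (χ - 1) * (((d:ℝ)-1) * M) = M := by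
        rw [hMdef]
        have h1r' := h1r.ne'
        linear_combination (-1:ℝ) * (div_mul_cancel₀ (χ - 1) h1r')
      calc Perc.expect (hamming d n) p (fun ω => ((NBset d n w b A ω).card : ℝ))
          ≤ Perc.expect (hamming d n) p (fun ω =>
              ((((RRset d n w b A ω).erase w).card : ℕ) : ℝ)
                + ∑ S ∈ 𝒮, INDfun d n w b A S ω * FSfun d n w b A S ω) :=
            expect_mono _ hp0 hp1 hpoint
        _ = Perc.expect (hamming d n) p
              (fun ω => ((((RRset d n w b A ω).erase w).card : ℕ) : ℝ))
            + ∑ S ∈ 𝒮, Perc.expect (hamming d n) p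
                (fun ω => INDfun d n w b A S ω * FSfun d n w b A S ω) := by
            rw [expect_add, expect_sum]
        _ ≤ Perc.expect (hamming d n) p
              (fun ω => ((((RRset d n w b A ω).erase w).card : ℕ) : ℝ))
            + ∑ S ∈ 𝒮, Perc.expect (hamming d n) p (INDfun d n w b A S)
                * (((S.erase w).card : ℝ) * (((d:ℝ)-1) * M)) := by
            apply add_le_add_right
            rw [Finset.sum_congr rfl hfact]
            apply Finset.sum_le_sum
            intro S hS
            exact mul_le_mul_of_nonneg_left (hIH S hS) (hind_nonneg S hS)
        _ = Perc.expect (hamming d n) p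
              (fun ω => ((((RRset d n w b A ω).erase w).card : ℕ) : ℝ))
            + (∑ S ∈ 𝒮, Perc.expect (hamming d n) p (INDfun d n w b A S)
                * ((S.erase w).card : ℝ)) * (((d:ℝ)-1) * M) := by
            rw [Finset.sum_mul]
            congr 1
            apply Finset.sum_congr rfl
            intro S _
            ring
        _ = Perc.expect (hamming d n) p
              (fun ω => ((((RRset d n w b A ω).erase w).card : ℕ) : ℝ))
            + Perc.expect (hamming d n) p
                (fun ω => ((((RRset d n w b A ω).erase w).card : ℕ) : ℝ))
              * (((d:ℝ)-1) * M) := by rw [hpart]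
        _ ≤ (χ - 1) + (χ - 1) * (((d:ℝ)-1) * M) := by
            have hmul := mul_le_mul_of_nonneg_right hEerase hdM0
            linarith
        _ = M := halg

end HamAux

namespace HamAux
open Perc PercAux
set_option linter.unusedSectionVars false
set_option maxHeartbeats 2000000

variable {d n : ℕ}

def FS0fun (d n : ℕ) (v : Fin d → Fin n) (i : Fin d) (S : Finset (Fin d → Fin n)) :
    Perc.Config (Fin d → Fin n) → ℝ :=
  fun ω => ∑ w₂ ∈ S, ∑ c ∈ Finset.univ.filter (fun c => c ≠ i),
    ((NBset d n w₂ c S ω).card : ℝ)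

def IND0fun (d n : ℕ) (v : Fin d → Fin n) (i : Fin d) (S : Finset (Fin d → Fin n)) :
    Perc.Config (Fin d → Fin n) → ℝ :=
  fun ω => if clusterF (lineGraph d n i v) ω v = S then (1:ℝ) else 0

lemma chi_le (d n : ℕ) (hd : 2 ≤ d) (hn : 2 ≤ n) (p : ℝ) (hp0 : 0 ≤ p) (hp1 : p ≤ 1)
    (v : Fin d → Fin n) (i : Fin d)
    (hr : ((d:ℝ)-1) * (lineChi d n p i v - 1) < 1) :
    Perc.chi (hamming d n) p v
      ≤ lineChi d n p i v / (1 - ((d:ℝ)-1) * (lineChi d n p i v - 1)) := by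
  have hχ1 : 1 ≤ lineChi d n p i v := one_le_lineChi d n p hp0 hp1 i v
  have hd1 : (1:ℝ) ≤ (d:ℝ) := by
    have : (1:ℕ) ≤ d := by omega
    exact_mod_cast this
  have hr0 : 0 ≤ ((d:ℝ)-1) * (lineChi d n p i v - 1) :=
    mul_nonneg (by linarith) (by linarith)
  have h1r : 0 < 1 - ((d:ℝ)-1) * (lineChi d n p i v - 1) := by linarith
  have hM0 : 0 ≤ (lineChi d n p i v - 1) / (1 - ((d:ℝ)-1) * (lineChi d n p i v - 1)) :=
    div_nonneg (by linarith) (le_of_lt h1r)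
  set χ := lineChi d n p i v with hχdef
  set M := (χ - 1) / (1 - ((d:ℝ)-1) * (χ - 1)) with hMdef
  set 𝒮 := (Finset.univ : Finset (Finset (Fin d → Fin n))).filter (fun S => v ∈ S) with hSdef
  have hRSmem : ∀ ω : Perc.Config (Fin d → Fin n), clusterF (lineGraph d n i v) ω v ∈ 𝒮 := by
    intro ω
    rw [hSdef, Finset.mem_filter]
    exact ⟨Finset.mem_univ _, self_mem_clusterF⟩
  have hR0 : Perc.expect (hamming d n) p
      (fun ω => ((clusterF (lineGraph d n i v) ω v).card : ℝ)) = χ := rfl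
  -- pointwise bound
  have hpoint : ∀ ω : Perc.Config (Fin d → Fin n),
      ((Perc.cluster (hamming d n) ω v).card : ℝ)
        ≤ ((clusterF (lineGraph d n i v) ω v).card : ℝ)
          + ∑ S ∈ 𝒮, IND0fun d n v i S ω * FS0fun d n v i S ω := by
    intro ω
    have hsum : ∑ S ∈ 𝒮, IND0fun d n v i S ω * FS0fun d n v i S ω
        = FS0fun d n v i (clusterF (lineGraph d n i v) ω v) ω := by
      rw [Finset.sum_eq_single_of_mem (clusterF (lineGraph d n i v) ω v) (hRSmem ω)]
      · rw [IND0fun, if_pos rfl, one_mul]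
      · intro S hS hne
        rw [IND0fun, if_neg (fun h => hne h.symm), zero_mul]
    rw [hsum]
    have hnat : (Perc.cluster (hamming d n) ω v).card
        ≤ (clusterF (lineGraph d n i v) ω v).card
          + ∑ w₂ ∈ clusterF (lineGraph d n i v) ω v,
              ∑ c ∈ Finset.univ.filter (fun c => c ≠ i),
                (NBset d n w₂ c (clusterF (lineGraph d n i v) ω v) ω).card := by
      have h1 := Finset.card_le_card (cluster_decomp v i ω)
      have h2 := Finset.card_union_le (clusterF (lineGraph d n i v) ω v)
        ((clusterF (lineGraph d n i v) ω v).biUnion (fun w₂ =>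
          (Finset.univ.filter (fun c => c ≠ i)).biUnion (fun c =>
            NBset d n w₂ c (clusterF (lineGraph d n i v) ω v) ω)))
      have h3 := Finset.card_biUnion_le (s := clusterF (lineGraph d n i v) ω v)
        (t := fun w₂ => (Finset.univ.filter (fun c => c ≠ i)).biUnion (fun c =>
            NBset d n w₂ c (clusterF (lineGraph d n i v) ω v) ω))
      have h4 : ∑ w₂ ∈ clusterF (lineGraph d n i v) ω v,
          ((Finset.univ.filter (fun c => c ≠ i)).biUnion (fun c =>
            NBset d n w₂ c (clusterF (lineGraph d n i v) ω v) ω)).card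
          ≤ ∑ w₂ ∈ clusterF (lineGraph d n i v) ω v,
              ∑ c ∈ Finset.univ.filter (fun c => c ≠ i),
                (NBset d n w₂ c (clusterF (lineGraph d n i v) ω v) ω).card :=
        Finset.sum_le_sum (fun w₂ _ => Finset.card_biUnion_le)
      omega
    rw [FS0fun]
    push_cast
    exact_mod_cast hnat
  have hfact : ∀ S ∈ 𝒮,
      Perc.expect (hamming d n) p (fun ω => IND0fun d n v i S ω * FS0fun d n v i S ω)
        = Perc.expect (hamming d n) p (IND0fun d n v i S)
          * Perc.expect (hamming d n) p (FS0fun d n v i S) := by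
    intro S hS
    apply expect_mul_of_determined (hamming d n) p (DD d n i v S)
    · intro ω₁ ω₂ hagree
      unfold IND0fun
      by_cases h1 : clusterF (lineGraph d n i v) ω₁ v = S
      · rw [if_pos h1, if_pos ((R0_det v i S hagree).mp h1)]
      · rw [if_neg h1, if_neg (fun h2 => h1 ((R0_det v i S hagree).mpr h2))]
    · intro ω₁ ω₂ hagree
      unfold FS0fun
      apply Finset.sum_congr rfl
      intro w₂ _
      apply Finset.sum_congr rfl
      intro c hc
      rw [NB_det w₂ (Finset.mem_filter.mp hc).2 S (Finset.Subset.refl S) hagree]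
  have hIH : ∀ S ∈ 𝒮, Perc.expect (hamming d n) p (FS0fun d n v i S)
      ≤ (S.card : ℝ) * (((d:ℝ)-1) * M) := by
    intro S hS
    unfold FS0fun
    rw [expect_sum]
    have hbound : ∀ w₂ ∈ S,
        Perc.expect (hamming d n) p (fun ω =>
          ∑ c ∈ Finset.univ.filter (fun c => c ≠ i),
            ((NBset d n w₂ c S ω).card : ℝ)) ≤ ((d:ℝ)-1) * M := by
      intro w₂ _
      rw [expect_sum]
      calc ∑ c ∈ Finset.univ.filter (fun c => c ≠ i),
          Perc.expect (hamming d n) p (fun ω => ((NBset d n w₂ c S ω).card : ℝ))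
          ≤ ∑ c ∈ Finset.univ.filter (fun c => c ≠ i), M :=
            Finset.sum_le_sum (fun c _ =>
              NB_expect_le d n hd p hp0 hp1 i v hr (Sᶜ.card) S le_rfl w₂ c)
        _ = (((Finset.univ.filter (fun c : Fin d => c ≠ i)).card : ℝ)) * M := by
            rw [Finset.sum_const, nsmul_eq_mul]
        _ = ((d:ℝ)-1) * M := by rw [card_dirs d (by omega) i]
    calc ∑ w₂ ∈ S, Perc.expect (hamming d n) p (fun ω =>
          ∑ c ∈ Finset.univ.filter (fun c => c ≠ i),
            ((NBset d n w₂ c S ω).card : ℝ))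
        ≤ ∑ w₂ ∈ S, ((d:ℝ)-1) * M := Finset.sum_le_sum hbound
      _ = (S.card : ℝ) * (((d:ℝ)-1) * M) := by
          rw [Finset.sum_const, nsmul_eq_mul]
  have hpart : ∑ S ∈ 𝒮, Perc.expect (hamming d n) p (IND0fun d n v i S) * (S.card : ℝ)
      = Perc.expect (hamming d n) p
          (fun ω => ((clusterF (lineGraph d n i v) ω v).card : ℝ)) := by
    have hstep : ∀ S ∈ 𝒮, Perc.expect (hamming d n) p (IND0fun d n v i S) * (S.card : ℝ)
        = Perc.expect (hamming d n) p (fun ω => IND0fun d n v i S ω * (S.card : ℝ)) :=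
      fun S _ => (expect_mul_const _ _ _ _).symm
    rw [Finset.sum_congr rfl hstep, ← expect_sum]
    congr 1
    funext ω
    rw [Finset.sum_eq_single_of_mem (clusterF (lineGraph d n i v) ω v) (hRSmem ω)]
    · rw [IND0fun, if_pos rfl, one_mul]
    · intro S hS hne
      rw [IND0fun, if_neg (fun h => hne h.symm), zero_mul]
  have hind_nonneg : ∀ S ∈ 𝒮, 0 ≤ Perc.expect (hamming d n) p (IND0fun d n v i S) := by
    intro S _
    apply expect_nonneg _ hp0 hp1
    intro ω
    unfold IND0fun
    split_ifs <;> norm_num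
  have hdM0 : 0 ≤ ((d:ℝ)-1) * M := mul_nonneg (by linarith) hM0
  have halg : χ + χ * (((d:ℝ)-1) * M) = χ / (1 - ((d:ℝ)-1) * (χ - 1)) := by
    rw [hMdef]
    field_simp
    ring
  have hchain : Perc.chi (hamming d n) p v ≤ χ + χ * (((d:ℝ)-1) * M) := by
    calc Perc.chi (hamming d n) p v
        ≤ Perc.expect (hamming d n) p (fun ω =>
            ((clusterF (lineGraph d n i v) ω v).card : ℝ)
              + ∑ S ∈ 𝒮, IND0fun d n v i S ω * FS0fun d n v i S ω) :=
          expect_mono _ hp0 hp1 hpoint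
      _ = Perc.expect (hamming d n) p
            (fun ω => ((clusterF (lineGraph d n i v) ω v).card : ℝ))
          + ∑ S ∈ 𝒮, Perc.expect (hamming d n) p
              (fun ω => IND0fun d n v i S ω * FS0fun d n v i S ω) := by
          rw [expect_add, expect_sum]
      _ ≤ Perc.expect (hamming d n) p
            (fun ω => ((clusterF (lineGraph d n i v) ω v).card : ℝ))
          + ∑ S ∈ 𝒮, Perc.expect (hamming d n) p (IND0fun d n v i S)
              * ((S.card : ℝ) * (((d:ℝ)-1) * M)) := by
          apply add_le_add_right
          rw [Finset.sum_congr rfl hfact]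
          apply Finset.sum_le_sum
          intro S hS
          exact mul_le_mul_of_nonneg_left (hIH S hS) (hind_nonneg S hS)
      _ = Perc.expect (hamming d n) p
            (fun ω => ((clusterF (lineGraph d n i v) ω v).card : ℝ))
          + (∑ S ∈ 𝒮, Perc.expect (hamming d n) p (IND0fun d n v i S)
              * (S.card : ℝ)) * (((d:ℝ)-1) * M) := by
          rw [Finset.sum_mul]
          congr 1
          apply Finset.sum_congr rfl
          intro S _
          ring
      _ = χ + χ * (((d:ℝ)-1) * M) := by rw [hpart, hR0]
  rw [← halg]
  exact hchain

end HamAux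

/-- Branching-process upper bound for the susceptibility of percolation on
`H(d,n)` in terms of the line susceptibility: if `(d-1)(χ_line(p) - 1) < 1` then
`χ(p) ≤ χ_line(p) / (1 - (d-1)(χ_line(p) - 1))`. -/
theorem hamming_susceptibility_line_bound :
    ∀ d n : ℕ, 2 ≤ d → 2 ≤ n → ∀ p : ℝ, 0 ≤ p → p ≤ 1 →
    ∀ v : Fin d → Fin n, ∀ i : Fin d,
      ((d : ℝ) - 1) * (lineChi d n p i v - 1) < 1 →
      Perc.chi (hamming d n) p v
        ≤ lineChi d n p i v / (1 - ((d : ℝ) - 1) * (lineChi d n p i v - 1)) := by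
  intro d n hd hn p hp0 hp1 v i hr
  exact HamAux.chi_le d n hd hn p hp0 hp1 v i hr
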